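/- Let K be a field and L a finite-dimensional Lie algebra over K with basis X_1, …, X_n and structure constants C_{ij}^k, such that span(X_1, …, X_s) is a Lie subalgebra S and M := span(X_{s+1}, …, X_n) satisfies [S, M] ⊆ M; let C'_{ij}^k be the structure constants of the associated Inönü–Wigner contraction g. Let A(x) and A'(x) be the n × n matrices with entries A(x)_{ij} = Σ_k C_{ij}^k x_k and A'(x)_{ij} = Σ_k C'_{ij}^k x_k, regarded as matrices over the fraction field K(x_1, …, x_n) of the polynomial ring. Then rank A'(x) ≤ rank A(x); equivalently, setting N(h) := n − (generic rank of the structure matrix of h), the number of functionally independent invariants does not decrease under the contraction: N(g) ≥ N(L). -/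

import Mathlib

open Matrix Module Submodule Polynomial

set_option maxHeartbeats 1000000
set_option synthInstance.maxHeartbeats 400000

/-- The structure matrix `A(x)_{ij} = Σ_k C_{ij}^k x_k` of a Lie algebra with structure
constants `C`, viewed over the fraction field `K(x_1, …, x_n)` of the polynomial ring. -/
noncomputable def structMatrix {K : Type*} [Field K] {n : ℕ}
    (C : Fin n → Fin n → Fin n → K) :
    Matrix (Fin n) (Fin n) (FractionRing (MvPolynomial (Fin n) K)) :=
  fun i j => algebraMap (MvPolynomial (Fin n) K) (FractionRing (MvPolynomial (Fin n) K))
    (∑ k, C i j k • MvPolynomial.X k)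

section rankLemmas

variable {F : Type*} [Field F]

/-- From a family whose span has finrank `r`, extract `r` linearly independent members. -/
lemma aux_exists_subfamily {V ι : Type*} [AddCommGroup V] [Module F V] [FiniteDimensional F V]
    (v : ι → V) (r : ℕ)
    (hr : finrank F (Submodule.span F (Set.range v)) = r) :
    ∃ g : Fin r → ι, LinearIndependent F (v ∘ g) := by
  obtain ⟨b, hbsub, hbspan, hbli⟩ := exists_linearIndependent F (Set.range v)
  have hbfin : b.Finite := hbli.setFinite
  haveI : Fintype b := hbfin.fintype
  have hcard : b.toFinset.card = r := by
    rw [← finrank_span_set_eq_card hbli, hbspan, hr]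
  have e : Fin r ≃ b := by
    apply (Fintype.equivFinOfCardEq ?_).symm
    rw [← hcard, Set.toFinset_card]
  choose g hg using fun x : b => hbsub x.2
  refine ⟨fun i => g (e i), ?_⟩
  have : v ∘ (fun i => g (e i)) = (fun x : b => (x : V)) ∘ e := by
    funext i; simp [Function.comp, hg (e i)]
  rw [this]
  exact hbli.comp e e.injective

/-- A matrix of rank `r` over a field has an invertible `r × r` minor. -/
lemma aux_exists_minor {m k : ℕ} (M : Matrix (Fin m) (Fin k) F) :
    ∃ f : Fin M.rank → Fin m, ∃ g : Fin M.rank → Fin k,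
      IsUnit (M.submatrix f g).det := by
  obtain ⟨g, hg⟩ := aux_exists_subfamily (F := F) Mᵀ M.rank M.rank_eq_finrank_span_cols.symm
  set N : Matrix (Fin m) (Fin M.rank) F := M.submatrix id g with hN
  have hNT : Nᵀ = Mᵀ ∘ g := by funext i j; rfl
  have hrankN : N.rank = M.rank := by
    rw [← N.rank_transpose, hNT]
    exact hg.rank_matrix.trans (Fintype.card_fin _)
  obtain ⟨f, hf⟩ := aux_exists_subfamily (F := F) (fun i => N i) M.rank
    (by have := N.rank_eq_finrank_span_row; rw [hrankN] at this; exact this.symm)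
  refine ⟨f, g, ?_⟩
  rw [← Matrix.isUnit_iff_isUnit_det, ← Matrix.linearIndependent_rows_iff_isUnit]
  exact hf

/-- An invertible `r × r` minor gives a lower bound on the rank. -/
lemma aux_minor_le_rank {m k r : ℕ} (M : Matrix (Fin m) (Fin k) F)
    (f : Fin r → Fin m) (g : Fin r → Fin k) (h : IsUnit (M.submatrix f g).det) :
    r ≤ M.rank := by
  have h1 : (M.submatrix f g).rank = r := by
    rw [Matrix.rank_of_isUnit _ ((Matrix.isUnit_iff_isUnit_det _).mpr h), Fintype.card_fin]
  let P : Matrix (Fin r) (Fin m) F := Matrix.of fun i a => if a = f i then 1 else 0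
  let Q : Matrix (Fin k) (Fin r) F := Matrix.of fun b j => if b = g j then 1 else 0
  have key : P * M * Q = M.submatrix f g := by
    ext i j
    simp only [Matrix.mul_apply, P, Q, Matrix.of_apply, ite_mul, one_mul, zero_mul,
      mul_ite, mul_one, mul_zero]
    simp [Finset.sum_ite_eq']
  calc r = (M.submatrix f g).rank := h1.symm
    _ = (P * M * Q).rank := by rw [key]
    _ ≤ (P * M).rank := Matrix.rank_mul_le_left _ _
    _ ≤ M.rank := Matrix.rank_mul_le_right _ _

/-- Rank is preserved by a (necessarily injective) homomorphism of fields. -/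
lemma aux_rank_map {m k : ℕ} {F₂ : Type*} [Field F₂] (φ : F →+* F₂)
    (M : Matrix (Fin m) (Fin k) F) : (M.map φ).rank = M.rank := by
  have inj := φ.injective
  apply le_antisymm
  · obtain ⟨f, g, h⟩ := aux_exists_minor (M.map φ)
    apply aux_minor_le_rank M f g
    have heq : (M.map φ).submatrix f g = (M.submatrix f g).map φ := rfl
    rw [heq, ← RingHom.mapMatrix_apply, ← RingHom.map_det] at h
    rw [isUnit_iff_ne_zero] at h ⊢
    intro h0; exact h (by rw [h0, map_zero])
  · obtain ⟨f, g, h⟩ := aux_exists_minor M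
    apply aux_minor_le_rank (M.map φ) f g
    have heq : (M.map φ).submatrix f g = (M.submatrix f g).map φ := rfl
    rw [heq, ← RingHom.mapMatrix_apply, ← RingHom.map_det]
    rw [isUnit_iff_ne_zero] at h ⊢
    exact fun h0 => h (inj (by rw [h0, map_zero]))

/-- Specializing the entries of a matrix (along any ring homomorphism into a field) cannot
increase the rank compared with the rank over a field in which the entries embed. -/
lemma aux_rank_spec_le {m k : ℕ} {R F₂ E : Type*} [CommRing R] [Field F₂] [Field E]
    (φ : R →+* F₂) (ι : R →+* E) (hι : Function.Injective ι)
    (M : Matrix (Fin m) (Fin k) R) : (M.map φ).rank ≤ (M.map ι).rank := by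
  obtain ⟨f, g, h⟩ := aux_exists_minor (M.map φ)
  apply aux_minor_le_rank (M.map ι) f g
  have h1 : (M.map φ).submatrix f g = (M.submatrix f g).map φ := rfl
  have h2 : (M.map ι).submatrix f g = (M.submatrix f g).map ι := rfl
  rw [h1, ← RingHom.mapMatrix_apply, ← RingHom.map_det] at h
  rw [h2, ← RingHom.mapMatrix_apply, ← RingHom.map_det]
  rw [isUnit_iff_ne_zero] at h ⊢
  intro h0
  have : (M.submatrix f g).det = 0 := hι (by rw [h0, map_zero])
  exact h (by rw [this, map_zero])

end rankLemmas

section basisLemmas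

variable {K : Type*} [Field K] {L : Type*} [LieRing L] [LieAlgebra K L] {n : ℕ}

lemma aux_repr_sum (b : Basis (Fin n) K L) (f : Fin n → K) (k : Fin n) :
    b.repr (∑ j, f j • b j) k = f k := by
  simp [map_sum, Finsupp.single_apply]

lemma aux_coeff_eq_zero (b : Basis (Fin n) K L) (f : Fin n → K) (t : Set (Fin n))
    (h : (∑ j, f j • b j) ∈ Submodule.span K (⇑b '' t)) {k : Fin n} (hk : k ∉ t) :
    f k = 0 := by
  have hsupp := (Basis.mem_span_image b).mp h
  by_contra hfk
  have : k ∈ (b.repr (∑ j, f j • b j)).support := by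
    rw [Finsupp.mem_support_iff, aux_repr_sum]; exact hfk
  exact hk (hsupp this)

lemma aux_anti (b : Basis (Fin n) K L) (C : Fin n → Fin n → Fin n → K)
    (hC : ∀ i j, ⁅b i, b j⁆ = ∑ k, C i j k • b k) (i j k : Fin n) :
    C j i k = - C i j k := by
  have h : ∑ l, (C j i l + C i j l) • b l = 0 := by
    simp only [add_smul, Finset.sum_add_distrib, ← hC]
    rw [← lie_skew (b i) (b j)]
    abel
  have h2 := aux_repr_sum b (fun l => C j i l + C i j l) k
  rw [h] at h2
  simp only [map_zero, Finsupp.coe_zero, Pi.zero_apply] at h2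
  exact eq_neg_of_add_eq_zero_left h2.symm

end basisLemmas

section aux

variable (K : Type*) [Field K] (n s : ℕ)

local notation "R" => MvPolynomial (Fin n) K
local notation "F" => FractionRing (MvPolynomial (Fin n) K)
local notation "E" => RatFunc (FractionRing (MvPolynomial (Fin n) K))

noncomputable def auxXbar (k : Fin n) : F := algebraMap R F (MvPolynomial.X k)

noncomputable def auxPsi0 : R →+* Polynomial F :=
  MvPolynomial.eval₂Hom (Polynomial.C.comp ((algebraMap R F).comp MvPolynomial.C))
    (fun k => (if (k : ℕ) < s then Polynomial.X else 1) * Polynomial.C (auxXbar K n k))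

lemma auxPsi0_injective : Function.Injective (auxPsi0 K n s) := by
  have key : (Polynomial.evalRingHom (1 : F)).comp (auxPsi0 K n s)
      = algebraMap R F := by
    apply MvPolynomial.ringHom_ext
    · intro a; simp [auxPsi0]
    · intro k
      simp only [RingHom.comp_apply, auxPsi0, MvPolynomial.eval₂Hom_X']
      split <;> simp [auxXbar]
  intro a b hab
  apply IsFractionRing.injective R F
  rw [← key, RingHom.comp_apply, RingHom.comp_apply, hab]

noncomputable def auxPhi : F →+* E :=
  IsFractionRing.lift (g := (algebraMap (Polynomial F) E).comp (auxPsi0 K n s))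
    ((IsFractionRing.injective (Polynomial F) E).comp (auxPsi0_injective K n s))

lemma auxPhi_algebraMap (x : R) :
    auxPhi K n s (algebraMap R F x) = algebraMap (Polynomial F) E (auxPsi0 K n s x) :=
  IsFractionRing.lift_algebraMap _ _

lemma auxPsi0_sum (C : Fin n → Fin n → Fin n → K) (i j : Fin n) :
    auxPsi0 K n s (∑ k, C i j k • MvPolynomial.X k)
      = ∑ k, Polynomial.C ((algebraMap R F) (MvPolynomial.C (C i j k))) *
          ((if (k : ℕ) < s then Polynomial.X else 1) * Polynomial.C (auxXbar K n k)) := by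
  rw [map_sum]
  refine Finset.sum_congr rfl fun k _ => ?_
  rw [MvPolynomial.smul_eq_C_mul, _root_.map_mul]
  simp [auxPsi0]

lemma auxAlg_sum (C' : Fin n → Fin n → Fin n → K) (i j : Fin n) :
    (algebraMap R F) (∑ k, C' i j k • MvPolynomial.X k)
      = ∑ k, (algebraMap R F) (MvPolynomial.C (C' i j k)) * auxXbar K n k := by
  rw [map_sum]
  refine Finset.sum_congr rfl fun k _ => ?_
  rw [MvPolynomial.smul_eq_C_mul, _root_.map_mul]
  rfl

variable {K n s} in
lemma aux_claim2 (C C' : Fin n → Fin n → Fin n → K)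
    (hv1 : ∀ i j k : Fin n, (i : ℕ) < s → (j : ℕ) < s → ¬((k : ℕ) < s) → C i j k = 0)
    (hv2 : ∀ i j k : Fin n, (i : ℕ) < s → ¬((j : ℕ) < s) → (k : ℕ) < s → C i j k = 0)
    (hanti : ∀ i j k, C j i k = - C i j k)
    (hC' : ∀ i j k, C' i j k = if s ≤ (i : ℕ) ∧ s ≤ (j : ℕ) then 0 else C i j k) :
    Matrix.diagonal (fun i : Fin n => if (i : ℕ) < s then 1 else (Polynomial.X : Polynomial F))
        * Matrix.of (fun i j => auxPsi0 K n s (∑ k, C i j k • MvPolynomial.X k))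
        * Matrix.diagonal (fun i : Fin n => if (i : ℕ) < s then 1 else Polynomial.X)
      = (Polynomial.X : Polynomial F) •
          Matrix.of (fun i j =>
            Polynomial.C ((algebraMap R F) (∑ k, C' i j k • MvPolynomial.X k)) +
            (if s ≤ (i : ℕ) ∧ s ≤ (j : ℕ)
              then Polynomial.X * auxPsi0 K n s (∑ k, C i j k • MvPolynomial.X k) else 0)) := by
  refine Matrix.ext fun i j => ?_
  rw [Matrix.mul_diagonal, Matrix.diagonal_mul, Matrix.smul_apply, smul_eq_mul]
  simp only [Matrix.of_apply]
  by_cases hi : (i : ℕ) < s <;> by_cases hj : (j : ℕ) < s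
  · -- i < s, j < s
    have hcond : ¬(s ≤ (i : ℕ) ∧ s ≤ (j : ℕ)) := fun h => absurd h.1 (Nat.not_le.mpr hi)
    have hC'eq : ∀ k, C' i j k = C i j k := fun k => by rw [hC', if_neg hcond]
    rw [if_pos hi, if_pos hj, one_mul, mul_one, if_neg hcond, add_zero,
      auxPsi0_sum, auxAlg_sum, map_sum, Finset.mul_sum]
    refine Finset.sum_congr rfl fun k _ => ?_
    by_cases hk : (k : ℕ) < s
    · rw [if_pos hk, hC'eq, _root_.map_mul]; ring
    · rw [hv1 i j k hi hj hk, hC'eq, hv1 i j k hi hj hk]; simp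
  · -- i < s, j ≥ s
    have hcond : ¬(s ≤ (i : ℕ) ∧ s ≤ (j : ℕ)) := fun h => absurd h.1 (Nat.not_le.mpr hi)
    have hC'eq : ∀ k, C' i j k = C i j k := fun k => by rw [hC', if_neg hcond]
    rw [if_pos hi, if_neg hj, one_mul, if_neg hcond, add_zero,
      auxPsi0_sum, auxAlg_sum, map_sum, Finset.mul_sum, Finset.sum_mul]
    refine Finset.sum_congr rfl fun k _ => ?_
    by_cases hk : (k : ℕ) < s
    · rw [hv2 i j k hi hj hk, hC'eq, hv2 i j k hi hj hk]; simp
    · rw [if_neg hk, hC'eq, _root_.map_mul]; ring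
  · -- i ≥ s, j < s
    have hcond : ¬(s ≤ (i : ℕ) ∧ s ≤ (j : ℕ)) := fun h => absurd h.2 (Nat.not_le.mpr hj)
    have hC'eq : ∀ k, C' i j k = C i j k := fun k => by rw [hC', if_neg hcond]
    have hv2' : ∀ k : Fin n, (k : ℕ) < s → C i j k = 0 := fun k hk => by
      rw [show C i j k = - C j i k by rw [hanti], hv2 j i k hj hi hk, neg_zero]
    rw [if_neg hi, if_pos hj, mul_one, if_neg hcond, add_zero,
      auxPsi0_sum, auxAlg_sum, map_sum, Finset.mul_sum, Finset.mul_sum]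
    refine Finset.sum_congr rfl fun k _ => ?_
    by_cases hk : (k : ℕ) < s
    · rw [hv2' k hk, hC'eq, hv2' k hk]; simp
    · rw [if_neg hk, hC'eq, _root_.map_mul]; ring
  · -- i ≥ s, j ≥ s
    have hC'eq : ∀ k, C' i j k = 0 := fun k => by
      rw [hC']; simp [Nat.le_of_not_lt hi, Nat.le_of_not_lt hj]
    have hp0 : (∑ k, C' i j k • MvPolynomial.X k : R) = 0 := by simp [hC'eq]
    rw [hp0, if_neg hi, if_neg hj, if_pos ⟨Nat.le_of_not_lt hi, Nat.le_of_not_lt hj⟩]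
    simp only [map_zero, Polynomial.C_0, zero_add]
    ring

variable {K n s} in
lemma aux_main (C C' : Fin n → Fin n → Fin n → K)
    (hv1 : ∀ i j k : Fin n, (i : ℕ) < s → (j : ℕ) < s → ¬((k : ℕ) < s) → C i j k = 0)
    (hv2 : ∀ i j k : Fin n, (i : ℕ) < s → ¬((j : ℕ) < s) → (k : ℕ) < s → C i j k = 0)
    (hanti : ∀ i j k, C j i k = - C i j k)
    (hC' : ∀ i j k, C' i j k = if s ≤ (i : ℕ) ∧ s ≤ (j : ℕ) then 0 else C i j k) :
    (structMatrix C').rank ≤ (structMatrix C).rank := by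
  classical
  set N : Matrix (Fin n) (Fin n) (Polynomial F) :=
    Matrix.of (fun i j => auxPsi0 K n s (∑ k, C i j k • MvPolynomial.X k)) with hN
  set G : Matrix (Fin n) (Fin n) (Polynomial F) :=
    Matrix.of (fun i j =>
      Polynomial.C ((algebraMap R F) (∑ k, C' i j k • MvPolynomial.X k)) +
      (if s ≤ (i : ℕ) ∧ s ≤ (j : ℕ)
        then Polynomial.X * auxPsi0 K n s (∑ k, C i j k • MvPolynomial.X k) else 0)) with hG
  set d : Fin n → Polynomial F := fun i => if (i : ℕ) < s then 1 else Polynomial.X with hd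
  have claim2 : Matrix.diagonal d * N * Matrix.diagonal d = Polynomial.X • G :=
    aux_claim2 C C' hv1 hv2 hanti hC'
  set coeP : Polynomial F →+* E := algebraMap (Polynomial F) E with hcoeP
  have hcoeP_inj : Function.Injective coeP := IsFractionRing.injective _ _
  have claim3 : G.map (Polynomial.evalRingHom (0 : F)) = structMatrix C' := by
    refine Matrix.ext fun i j => ?_
    simp only [hG, Matrix.map_apply, Matrix.of_apply, Polynomial.coe_evalRingHom,
      Polynomial.eval_add, Polynomial.eval_C, structMatrix]
    split_ifs <;> simp
  have hXne : coeP Polynomial.X ≠ 0 := fun h0 => by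
    simpa [Polynomial.X_ne_zero] using hcoeP_inj (h0.trans (map_zero coeP).symm)
  have hdne : ∀ i, coeP (d i) ≠ 0 := by
    intro i h0
    have hdi : d i = 0 := hcoeP_inj (h0.trans (map_zero coeP).symm)
    by_cases hi : (i : ℕ) < s
    · simp only [hd, if_pos hi] at hdi; exact one_ne_zero hdi
    · simp only [hd, if_neg hi] at hdi; exact Polynomial.X_ne_zero hdi
  have hD' : (Matrix.diagonal d).map coeP = Matrix.diagonal (fun i => coeP (d i)) :=
    Matrix.diagonal_map (map_zero _)
  have hdetD' : IsUnit ((Matrix.diagonal d).map coeP).det := by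
    rw [hD', Matrix.det_diagonal, isUnit_iff_ne_zero]
    exact Finset.prod_ne_zero_iff.mpr fun i _ => hdne i
  have hmapXG : ((Polynomial.X : Polynomial F) • G).map coeP = coeP Polynomial.X • (G.map coeP) := by
    refine Matrix.ext fun i j => ?_
    simp only [Matrix.map_apply, Matrix.smul_apply, smul_eq_mul, _root_.map_mul]
  have hfact : coeP Polynomial.X • (G.map coeP)
      = ((Matrix.diagonal d).map coeP) * (N.map coeP) * ((Matrix.diagonal d).map coeP) := by
    rw [← hmapXG, ← claim2, Matrix.map_mul, Matrix.map_mul]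
  have step2a : (coeP Polynomial.X • (G.map coeP)).rank = (G.map coeP).rank := by
    rw [Matrix.smul_eq_diagonal_mul]
    apply Matrix.rank_mul_eq_right_of_isUnit_det
    rw [Matrix.det_diagonal, Finset.prod_const]
    exact isUnit_iff_ne_zero.mpr (pow_ne_zero _ hXne)
  have step2b : (((Matrix.diagonal d).map coeP) * (N.map coeP)
      * ((Matrix.diagonal d).map coeP)).rank = (N.map coeP).rank := by
    rw [Matrix.rank_mul_eq_left_of_isUnit_det _ _ hdetD',
      Matrix.rank_mul_eq_right_of_isUnit_det _ _ hdetD']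
  have step2c : (N.map coeP).rank = (structMatrix C).rank := by
    have h1 : (structMatrix C).map (auxPhi K n s) = N.map coeP :=
      Matrix.ext fun i j => auxPhi_algebraMap K n s _
    rw [← h1, aux_rank_map]
  calc (structMatrix C').rank
      = (G.map (Polynomial.evalRingHom (0 : F))).rank := by rw [claim3]
    _ ≤ (G.map coeP).rank := aux_rank_spec_le _ _ hcoeP_inj G
    _ = (coeP Polynomial.X • (G.map coeP)).rank := step2a.symm
    _ = (N.map coeP).rank := by rw [hfact, step2b]
    _ = (structMatrix C).rank := step2c

end aux

/-- Let `X_1, …, X_n` be a basis of a Lie algebra `L` adapted to a reduction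
chain (`S = span(X_1, …, X_s)` a subalgebra, `M = span(X_{s+1}, …, X_n)` with `[S, M] ⊆ M`),
and let `C'` be the structure constants of the associated Inönü–Wigner contraction.  Then
`rank A'(x) ≤ rank A(x)`, equivalently the number `N(h) = n − rank` of functionally
independent invariants does not decrease under the contraction: `N(g) ≥ N(L)`. -/
theorem stmt8 {K : Type*} [Field K] {L : Type*} [LieRing L] [LieAlgebra K L]
    {n s : ℕ} (hsn : s ≤ n) (b : Basis (Fin n) K L)
    (C : Fin n → Fin n → Fin n → K)
    (hC : ∀ i j, ⁅b i, b j⁆ = ∑ k, C i j k • b k)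
    (hSsub : ∀ x ∈ Submodule.span K (⇑b '' {i : Fin n | (i : ℕ) < s}),
        ∀ y ∈ Submodule.span K (⇑b '' {i : Fin n | (i : ℕ) < s}),
        ⁅x, y⁆ ∈ Submodule.span K (⇑b '' {i : Fin n | (i : ℕ) < s}))
    (hSM : ∀ x ∈ Submodule.span K (⇑b '' {i : Fin n | (i : ℕ) < s}),
        ∀ m ∈ Submodule.span K (⇑b '' {i : Fin n | s ≤ (i : ℕ)}),
        ⁅x, m⁆ ∈ Submodule.span K (⇑b '' {i : Fin n | s ≤ (i : ℕ)}))
    (C' : Fin n → Fin n → Fin n → K)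
    (hC' : ∀ i j k, C' i j k = if s ≤ (i : ℕ) ∧ s ≤ (j : ℕ) then 0 else C i j k) :
    (structMatrix C').rank ≤ (structMatrix C).rank ∧
    n - (structMatrix C).rank ≤ n - (structMatrix C').rank := by
  have hv1 : ∀ i j k : Fin n, (i : ℕ) < s → (j : ℕ) < s → ¬((k : ℕ) < s) → C i j k = 0 := by
    intro i j k hi hj hk
    have hmem : (∑ l, C i j l • b l) ∈ Submodule.span K (⇑b '' {i : Fin n | (i : ℕ) < s}) := by
      rw [← hC]
      exact hSsub _ (Submodule.subset_span ⟨i, hi, rfl⟩) _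
        (Submodule.subset_span ⟨j, hj, rfl⟩)
    exact aux_coeff_eq_zero b (C i j) _ hmem hk
  have hv2 : ∀ i j k : Fin n, (i : ℕ) < s → ¬((j : ℕ) < s) → (k : ℕ) < s → C i j k = 0 := by
    intro i j k hi hj hk
    have hmem : (∑ l, C i j l • b l) ∈ Submodule.span K (⇑b '' {i : Fin n | s ≤ (i : ℕ)}) := by
      rw [← hC]
      exact hSM _ (Submodule.subset_span ⟨i, hi, rfl⟩) _
        (Submodule.subset_span ⟨j, Nat.le_of_not_lt hj, rfl⟩)
    exact aux_coeff_eq_zero b (C i j) _ hmem (by simpa using Nat.not_le.mpr hk)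
  have hanti := aux_anti b C hC
  have main := aux_main C C' hv1 hv2 hanti hC'
  exact ⟨main, Nat.sub_le_sub_left main n⟩
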